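/- Let x = (x_j)_{j≥1} be a sequence of reals with 0 ≤ x_j < 1 for all j and Σ_{j≥1} x_j < ∞. Then for every multi-index ν ∈ F, the series Σ_{μ∈F, μ≥ν} (μ!/((μ−ν)! ν!)) · x^{μ−ν} · (1−x)^ν converges and equals ∏_{j=1}^∞ (1 − x_j)^{−1}; in particular its value is independent of ν. -/

import Mathlib

open scoped BigOperators ENNReal

noncomputable section

/-- The set `F` of finitely supported multi-indices. -/
abbrev MIdx : Type := ℕ →₀ ℕ

/-- `x^ν := ∏_j x_j^{ν_j}` for a finitely supported multi-index `ν`. -/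
def mpow (x : ℕ → ℝ) (ν : MIdx) : ℝ := ν.prod fun j k => x j ^ k

/-- `μ!/((μ-ν)!ν!) = ∏_j C(μ_j, ν_j)` (meaningful for `ν ≤ μ`). -/
def mchoose (μ ν : MIdx) : ℕ := μ.prod fun j k => k.choose (ν j)

set_option maxHeartbeats 1000000

noncomputable def insertEquiv (a : ℕ) (s : Finset ℕ) (ha : a ∉ s) :
    ℕ × {m : MIdx // m.support ⊆ s} ≃ {m : MIdx // m.support ⊆ insert a s} where
  toFun p := ⟨Finsupp.single a p.1 + p.2.1, by
    refine (Finsupp.support_add).trans ?_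
    intro j hj
    rcases Finset.mem_union.1 hj with h | h
    · exact Finset.mem_insert.2 (Or.inl (by simpa using Finsupp.support_single_subset h))
    · exact Finset.mem_insert.2 (Or.inr (p.2.2 h))⟩
  invFun m := (m.1 a, ⟨m.1.erase a, by
    intro j hj
    have hj0 : m.1.erase a j ≠ 0 := Finsupp.mem_support_iff.1 hj
    rcases eq_or_ne j a with rfl | hne
    · simp [Finsupp.erase_same] at hj0
    · rw [Finsupp.erase_ne hne] at hj0
      rcases Finset.mem_insert.1 (m.2 (Finsupp.mem_support_iff.2 hj0)) with h | h
      · exact absurd h hne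
      · exact h⟩)
  left_inv p := by
    have hpa : p.2.1 a = 0 := by
      by_contra h
      exact ha (p.2.2 (Finsupp.mem_support_iff.2 h))
    ext j
    · simp [hpa]
    · rcases eq_or_ne j a with rfl | hj
      · simp [Finsupp.erase_same, hpa]
      · simp [Finsupp.erase_ne hj, Finsupp.single_eq_of_ne (Ne.symm hj)]
  right_inv m := by
    ext j
    rcases eq_or_ne j a with rfl | hj
    · simp [Finsupp.erase_same]
    · simp [Finsupp.erase_ne hj, Finsupp.single_eq_of_ne' (Ne.symm hj)]

lemma insertEquiv_apply (a : ℕ) (s : Finset ℕ) (ha : a ∉ s) (p : ℕ × {m : MIdx // m.support ⊆ s}) :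
    ((insertEquiv a s ha) p).1 = Finsupp.single a p.1 + p.2.1 := rfl

lemma prod_eq (g : ℕ → ℕ → ℝ) (hg0 : ∀ j, g j 0 = 1) (m : MIdx) (s : Finset ℕ)
    (hs : m.support ⊆ s) : m.prod g = ∏ j ∈ s, g j (m j) :=
  Finsupp.prod_of_support_subset m hs g (fun i _ => hg0 i)

lemma stepA {g : ℕ → ℕ → ℝ} {S : ℕ → ℝ}
    (hg0 : ∀ j, g j 0 = 1) (hgnn : ∀ j k, 0 ≤ g j k) (hgS : ∀ j, HasSum (g j) (S j))
    (s : Finset ℕ) :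
    HasSum (fun m : {m : MIdx // m.support ⊆ s} => (m : MIdx).prod g) (∏ j ∈ s, S j) := by
  classical
  induction s using Finset.induction_on with
  | empty =>
    have h0 : ((⟨0, by simp⟩ : {m : MIdx // m.support ⊆ (∅ : Finset ℕ)}) : MIdx).prod g = 1 := by
      simp [Finsupp.prod]
    rw [Finset.prod_empty]
    have := hasSum_single (f := fun m : {m : MIdx // m.support ⊆ (∅ : Finset ℕ)} =>
        (m : MIdx).prod g) (⟨0, by simp⟩ : {m : MIdx // m.support ⊆ (∅ : Finset ℕ)}) ?_
    · rwa [h0] at this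
    · intro b hb
      exfalso
      apply hb
      ext1
      exact Finsupp.support_eq_empty.1 (Finset.subset_empty.1 b.2)
  | @insert a s ha ih =>
    have key : HasSum (fun p : ℕ × {m : MIdx // m.support ⊆ s} =>
        g a p.1 * (p.2 : MIdx).prod g) (S a * ∏ j ∈ s, S j) :=
      (hgS a).mul ih ((hgS a).summable.mul_of_nonneg ih.summable (fun k => hgnn a k)
        (fun m => Finset.prod_nonneg (fun i _ => hgnn _ _)))
    rw [Finset.prod_insert ha]
    rw [← (insertEquiv a s ha).hasSum_iff]
    convert key using 1
    funext p
    have hpa : p.2.1 a = 0 := by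
      by_contra h
      exact ha (p.2.2 (Finsupp.mem_support_iff.2 h))
    have hsupp : (Finsupp.single a p.1 + p.2.1).support ⊆ insert a s := by
      have := ((insertEquiv a s ha) p).2
      rwa [insertEquiv_apply] at this
    simp only [Function.comp_apply, insertEquiv_apply]
    rw [prod_eq g hg0 _ (insert a s) hsupp, Finset.prod_insert ha,
      prod_eq g hg0 p.2.1 s p.2.2]
    congr 1
    · simp [hpa]
    · refine Finset.prod_congr rfl fun j hj => ?_
      have hja : a ≠ j := fun h => ha (h ▸ hj)
      rw [Finsupp.add_apply, Finsupp.single_eq_of_ne' hja]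
      simp

lemma master {g : ℕ → ℕ → ℝ} {S : ℕ → ℝ}
    (hg0 : ∀ j, g j 0 = 1) (hgnn : ∀ j k, 0 ≤ g j k) (hgS : ∀ j, HasSum (g j) (S j))
    (hS : Multipliable S) :
    HasSum (fun m : MIdx => m.prod g) (∏' j, S j) := by
  classical
  have hS1 : ∀ j, 1 ≤ S j := fun j => by
    have := le_hasSum (hgS j) 0 (fun k _ => hgnn j k)
    rwa [hg0 j] at this
  have hfnn : ∀ m : MIdx, 0 ≤ m.prod g := fun m => Finset.prod_nonneg fun i _ => hgnn _ _
  have hP : HasProd S (∏' j, S j) := hS.hasProd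
  have hprodle : ∀ s : Finset ℕ, ∏ j ∈ s, S j ≤ ∏' j, S j := by
    intro s
    refine ge_of_tendsto hP ?_
    filter_upwards [Filter.eventually_ge_atTop s] with t hts
    rw [← Finset.prod_sdiff hts]
    have h1 : (1:ℝ) ≤ ∏ j ∈ t \ s, S j := by
      calc (1:ℝ) = ∏ j ∈ t \ s, 1 := by simp
      _ ≤ ∏ j ∈ t \ s, S j :=
        Finset.prod_le_prod (fun i _ => zero_le_one) (fun i _ => hS1 i)
    exact le_mul_of_one_le_left (Finset.prod_nonneg fun i _ => le_trans zero_le_one (hS1 i)) h1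
  apply hasSum_of_isLUB_of_nonneg _ hfnn
  constructor
  · rintro r ⟨F, rfl⟩
    set s := F.sup Finsupp.support with hs
    have hmem : ∀ m ∈ F, m.support ⊆ s := fun m hm => Finset.le_sup hm
    have heq : ∑ m' ∈ F.subtype (fun m : MIdx => m.support ⊆ s),
        (m' : MIdx).prod g = ∑ m ∈ F, m.prod g :=
      Finset.sum_subtype_of_mem (fun m => m.prod g) hmem
    show ∑ m ∈ F, m.prod g ≤ _
    rw [← heq]
    exact le_trans (sum_le_hasSum _ (fun i _ => hfnn _) (stepA hg0 hgnn hgS s)) (hprodle s)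
  · intro y hy
    refine le_of_tendsto' hP fun s => ?_
    refine hasSum_le_of_sum_le (stepA hg0 hgnn hgS s) fun t => ?_
    have : ∑ m' ∈ t, (m' : MIdx).prod g
        = ∑ m ∈ t.map (Function.Embedding.subtype _), m.prod g := by
      rw [Finset.sum_map]; rfl
    rw [this]
    exact hy ⟨t.map (Function.Embedding.subtype _), rfl⟩

lemma mult_aux (x : ℕ → ℝ) (hx0 : ∀ j, 0 ≤ x j) (hx1 : ∀ j, x j < 1) (hsum : Summable x) :
    Multipliable (fun j => (1 - x j)⁻¹) := by
  have hpos : ∀ j, 0 < 1 - x j := fun j => by linarith [hx1 j]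
  have hLle : ∀ j, -Real.log (1 - x j) ≤ x j / (1 - x j) := by
    intro j
    have h := Real.log_le_sub_one_of_pos (inv_pos.2 (hpos j))
    rw [Real.log_inv] at h
    have h2 : (1 - x j)⁻¹ - 1 = x j / (1 - x j) := by
      rw [inv_eq_one_div, div_sub' (ne_of_gt (hpos j))]
      ring_nf
    linarith
  have hLnn : ∀ j, 0 ≤ -Real.log (1 - x j) := fun j => by
    have := Real.log_nonpos (le_of_lt (hpos j)) (by linarith [hx0 j]); linarith
  obtain ⟨N, hN⟩ := Filter.eventually_atTop.1
    (hsum.tendsto_atTop_zero.eventually_lt_const (by norm_num : (0:ℝ) < 1/2))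
  have hq : Summable (fun j => x j / (1 - x j)) := by
    rw [← summable_nat_add_iff N]
    apply Summable.of_nonneg_of_le
      (fun j => div_nonneg (hx0 _) (le_of_lt (hpos _)))
      (fun j => ?_) (((summable_nat_add_iff N).2 hsum).mul_left 2)
    have hx : x (j + N) < 1/2 := hN _ (Nat.le_add_left _ _)
    rw [div_le_iff₀ (hpos _)]
    nlinarith [hx0 (j + N)]
  have hL : Summable (fun j => -Real.log (1 - x j)) :=
    Summable.of_nonneg_of_le hLnn hLle hq
  refine ⟨Real.exp (∑' j, -Real.log (1 - x j)), ?_⟩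
  have := hL.hasSum.rexp
  convert this using 1
  funext j
  simp only [Function.comp_apply, Real.exp_neg, Real.exp_log (hpos j)]


/-- For `0 ≤ x_j < 1` with `Σ_j x_j < ∞` and any multi-index `ν`, the series
`Σ_{μ ≥ ν} (μ!/((μ-ν)!ν!)) x^{μ-ν} (1-x)^ν` converges to `∏_j (1 - x_j)^{-1}`;
in particular its value is independent of `ν`. -/
theorem binomial_series_multiindex
    (x : ℕ → ℝ) (hx0 : ∀ j, 0 ≤ x j) (hx1 : ∀ j, x j < 1) (hsum : Summable x) :
    Multipliable (fun j => (1 - x j)⁻¹) ∧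
    ∀ ν : MIdx, HasSum
      (fun μ : {μ : MIdx // ν ≤ μ} =>
        (mchoose μ.1 ν : ℝ) * mpow x (μ.1 - ν) * mpow (fun j => 1 - x j) ν)
      (∏' j, (1 - x j)⁻¹) := by
  classical
  have hpos : ∀ j, 0 < 1 - x j := fun j => by linarith [hx1 j]
  have hM : Multipliable (fun j => (1 - x j)⁻¹) := mult_aux x hx0 hx1 hsum
  refine ⟨hM, fun ν => ?_⟩
  set g : ℕ → ℕ → ℝ := fun j k => ((k + ν j).choose (ν j) : ℝ) * x j ^ k with hg
  have hg0 : ∀ j, g j 0 = 1 := fun j => by simp [hg]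
  have hgnn : ∀ j k, 0 ≤ g j k := fun j k =>
    mul_nonneg (Nat.cast_nonneg _) (pow_nonneg (hx0 j) k)
  set S : ℕ → ℝ := fun j => 1 / (1 - x j) ^ (ν j + 1) with hSdef
  have hgS : ∀ j, HasSum (g j) (S j) := fun j =>
    hasSum_choose_mul_geometric_of_norm_lt_one (ν j)
      (by rw [Real.norm_eq_abs, abs_of_nonneg (hx0 j)]; exact hx1 j)
  set w : ℕ → ℝ := fun j => ((1 - x j) ^ (ν j))⁻¹ with hw
  have hw1 : ∀ j ∉ ν.support, w j = 1 := fun j hj => by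
    simp [hw, Finsupp.notMem_support_iff.1 hj]
  have hwM : Multipliable w := multipliable_of_ne_finset_one hw1
  have hSeq : S = fun j => (1 - x j)⁻¹ * w j := by
    funext j
    rw [hSdef]
    simp only [hw]
    rw [pow_succ, one_div, mul_inv]
    ring
  have hSM : Multipliable S := by rw [hSeq]; exact hM.mul hwM
  have hmaster := master hg0 hgnn hgS hSM
  -- value computation
  have hval : (∏' j, S j) * mpow (fun j => 1 - x j) ν = ∏' j, (1 - x j)⁻¹ := by
    have htw : ∏' j, w j = ∏ j ∈ ν.support, w j := tprod_eq_prod hw1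
    have h2 : ∏' j, S j = (∏' j, (1 - x j)⁻¹) * ∏' j, w j := by
      rw [hSeq]; exact hM.tprod_mul hwM
    rw [h2, htw, mpow, Finsupp.prod, mul_assoc, ← Finset.prod_mul_distrib]
    have h3 : ∏ j ∈ ν.support, (w j * (1 - x j) ^ ν j) = 1 :=
      Finset.prod_eq_one fun j _ => inv_mul_cancel₀ (pow_ne_zero _ (ne_of_gt (hpos j)))
    rw [h3, mul_one]
  -- key pointwise identity
  have key : ∀ m : MIdx, (mchoose (ν + m) ν : ℝ) * mpow x m = m.prod g := by
    intro m
    set s := ν.support ∪ m.support with hs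
    have hsupp : (ν + m).support = s := by
      ext j
      simp only [hs, Finsupp.mem_support_iff, Finset.mem_union, Finsupp.add_apply]
      omega
    have h1 : mchoose (ν + m) ν = ∏ j ∈ s, ((ν + m) j).choose (ν j) := by
      rw [mchoose, Finsupp.prod, hsupp]
    have h2 : mpow x m = ∏ j ∈ s, x j ^ m j :=
      Finsupp.prod_of_support_subset m Finset.subset_union_right _ (fun i _ => pow_zero _)
    have h3 : m.prod g = ∏ j ∈ s, g j (m j) :=
      Finsupp.prod_of_support_subset m Finset.subset_union_right _ (fun i _ => hg0 i)
    rw [h1, h2, h3, Nat.cast_prod, ← Finset.prod_mul_distrib]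
    refine Finset.prod_congr rfl fun j hj => ?_
    rw [hg]
    simp only [Finsupp.add_apply]
    rw [add_comm (ν j) (m j)]
  -- reindexing equivalence
  have hle : ∀ m : MIdx, ν ≤ ν + m := fun m =>
    Finsupp.le_def.2 fun j => by simp [Finsupp.add_apply]
  let e : MIdx ≃ {μ : MIdx // ν ≤ μ} :=
    { toFun := fun m => ⟨ν + m, hle m⟩
      invFun := fun μ => μ.1 - ν
      left_inv := fun m => by
        ext j
        simp only [Finsupp.tsub_apply, Finsupp.add_apply]
        omega
      right_inv := fun μ => by
        ext j
        have := Finsupp.le_def.1 μ.2 j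
        simp only [Finsupp.add_apply, Finsupp.tsub_apply]
        omega }
  rw [← e.hasSum_iff]
  have hfe : (fun μ : {μ : MIdx // ν ≤ μ} =>
        (mchoose μ.1 ν : ℝ) * mpow x (μ.1 - ν) * mpow (fun j => 1 - x j) ν) ∘ e
      = fun m : MIdx => m.prod g * mpow (fun j => 1 - x j) ν := by
    funext m
    have hsub : (ν + m) - ν = m := by
      ext j
      simp only [Finsupp.tsub_apply, Finsupp.add_apply]
      omega
    show (mchoose (ν + m) ν : ℝ) * mpow x ((ν + m) - ν) * mpow (fun j => 1 - x j) ν = _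
    rw [hsub, key m]
  rw [hfe, ← hval]
  exact hmaster.mul_right _
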